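/- Given a feasible strategic MMU operation plan m whose induced assignment sends the unsteerable demand of each origin to its closest operating facility, and given the worst-case demands over interval uncertainty sets (d_v = beta_v, u_v = tau_v), m is robust feasible for all realizations (xi, eta) with alpha_v <= xi_v <= beta_v and sigma_v <= eta_v <= tau_v. Conversely, robust feasibility over the interval uncertainty sets implies feasibility for the worst-case demands. -/

import Mathlib

open Finset

lemma exists_le_sum_eq {κ : Type*} [DecidableEq κ] (s : Finset κ) (g : κ → ℕ) (t : ℕ)
    (ht : t ≤ ∑ k ∈ s, g k) :
    ∃ g' : κ → ℕ, (∀ k, g' k ≤ g k) ∧ (∀ k, k ∉ s → g' k = 0) ∧ ∑ k ∈ s, g' k = t := by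
  induction s using Finset.induction_on generalizing t with
  | empty =>
    simp only [Finset.sum_empty, Nat.le_zero] at ht
    exact ⟨fun _ => 0, fun _ => Nat.zero_le _, fun _ _ => rfl, by simp [ht]⟩
    | @insert a s ha ih =>
    rw [Finset.sum_insert ha] at ht
    have h1 : t - min t (g a) ≤ ∑ k ∈ s, g k := by omega
    obtain ⟨g', hle, hz, hsum⟩ := ih _ h1
    refine ⟨fun k => if k = a then min t (g a) else g' k, ?_, ?_, ?_⟩
    · intro k
      by_cases h : k = a
      · simp [h, min_le_right]
      · simpa [h] using hle k
    · intro k hk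
      simp only [Finset.mem_insert, not_or] at hk
      simp [hk.1, hz k hk.2]
    · rw [Finset.sum_insert ha, if_pos rfl]
      have heq : ∑ k ∈ s, (if k = a then min t (g a) else g' k) = ∑ k ∈ s, g' k :=
        Finset.sum_congr rfl (fun k hk => by
          have hka : k ≠ a := fun h => ha (h ▸ hk); simp [hka])
      rw [heq]; omega

/-- A strategic MMU operation plan `m` (with unsteerable demands
routed by `φ` to the closest operating facility) is feasible for the worst-case
interval demands `(β, τ)` iff it is robust feasible for every realization
`(ξ, η)` in the interval uncertainty sets. -/
theorem stmt_10 {V L P : Type*} [Fintype V] [DecidableEq V] [DecidableEq L] [DecidableEq P]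
    (N : V → Finset (L ⊕ P)) (dist : V → L ⊕ P → ℕ)
    (b : L → ℕ) (bhat : ℕ) (bbar : P → ℕ)
    (m : L → ℕ) (hm : ∀ l, m l ≤ b l)
    (φ : V → L ⊕ P)
    (hφmem : ∀ v, φ v ∈ N v)
    (hφop : ∀ v, Sum.elim (fun l => 0 < m l) (fun _ => True) (φ v))
    (hφmin : ∀ v, ∀ k ∈ N v, Sum.elim (fun l => 0 < m l) (fun _ => True) k →
      dist v (φ v) ≤ dist v k)
    (α β σ τ : V → ℕ) (hαβ : ∀ v, α v ≤ β v) (hστ : ∀ v, σ v ≤ τ v) :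
    (∃ f : V → L ⊕ P → ℕ, (∀ v k, k ∉ N v → f v k = 0) ∧
        (∀ v, ∑ k ∈ N v, f v k = β v) ∧
        (∀ k, (∑ v ∈ univ.filter (fun v => φ v = k), τ v) +
            (∑ v ∈ univ.filter (fun v => k ∈ N v), f v k) ≤
          Sum.elim (fun l => bhat * m l) bbar k)) ↔
    (∀ ξ η : V → ℕ, (∀ v, α v ≤ ξ v ∧ ξ v ≤ β v) → (∀ v, σ v ≤ η v ∧ η v ≤ τ v) →
      ∃ f : V → L ⊕ P → ℕ, (∀ v k, k ∉ N v → f v k = 0) ∧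
        (∀ v, ∑ k ∈ N v, f v k = ξ v) ∧
        (∀ k, (∑ v ∈ univ.filter (fun v => φ v = k), η v) +
            (∑ v ∈ univ.filter (fun v => k ∈ N v), f v k) ≤
          Sum.elim (fun l => bhat * m l) bbar k)) := by
  constructor
  · rintro ⟨f, hz, hsum, hcap⟩ ξ η hξ hη
    choose f' hle hz' hsum' using fun v =>
      exists_le_sum_eq (N v) (f v) (ξ v) (by rw [hsum v]; exact (hξ v).2)
    refine ⟨f', fun v k hk => hz' v k hk, hsum', fun k => ?_⟩
    refine le_trans ?_ (hcap k)
    exact Nat.add_le_add (Finset.sum_le_sum (fun v _ => (hη v).2))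
      (Finset.sum_le_sum (fun v _ => hle v k))
  · intro h
    exact h β τ (fun v => ⟨hαβ v, le_refl _⟩) (fun v => ⟨hστ v, le_refl _⟩)
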